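/- Let I be a finite index set and S : I → subsets of {1,…,k} a family of subsets of {1,…,k} such that every element of {1,…,k} is contained in exactly h members of the family (counted with multiplicity over I). Then Σ_{i∈I} H(Y_{S(i)} | X) ≥ h · H(Y_{[k]} | X). -/

import Mathlib

open Finset

/-- Probability that the finitely-valued random variable `X` takes value `x`,
with respect to the probability mass function `p` on the finite sample space `Ω`. -/
noncomputable def pmfProb {Ω : Type*} [Fintype Ω] {α : Type*} [Fintype α] [DecidableEq α]
    (p : Ω → ℝ) (X : Ω → α) (x : α) : ℝ :=
  ∑ ω, if X ω = x then p ω else 0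

/-- Shannon entropy (natural logarithm) of the random variable `X`. -/
noncomputable def entH {Ω : Type*} [Fintype Ω] {α : Type*} [Fintype α] [DecidableEq α]
    (p : Ω → ℝ) (X : Ω → α) : ℝ :=
  ∑ x, Real.negMulLog (pmfProb p X x)

/-- Conditional Shannon entropy `H(X|Y) = H(X,Y) - H(Y)`. -/
noncomputable def condH {Ω : Type*} [Fintype Ω] {α β : Type*} [Fintype α] [DecidableEq α]
    [Fintype β] [DecidableEq β] (p : Ω → ℝ) (X : Ω → α) (Y : Ω → β) : ℝ :=
  entH p (fun ω => (X ω, Y ω)) - entH p Y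

/-- Mutual information `I(X;Y) = H(X) + H(Y) - H(X,Y)`. -/
noncomputable def mutInfo {Ω : Type*} [Fintype Ω] {α β : Type*} [Fintype α] [DecidableEq α]
    [Fintype β] [DecidableEq β] (p : Ω → ℝ) (X : Ω → α) (Y : Ω → β) : ℝ :=
  entH p X + entH p Y - entH p (fun ω => (X ω, Y ω))

/-- The conditional probability mass function given an event `E`. -/
noncomputable def condPMF {Ω : Type*} [Fintype Ω] (p : Ω → ℝ) (E : Ω → Prop)
    [DecidablePred E] : Ω → ℝ :=
  fun ω => if E ω then p ω / (∑ ω' ∈ Finset.univ.filter E, p ω') else 0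


section Basic
variable {Ω : Type*} [Fintype Ω] {α β γ : Type*} [Fintype α] [DecidableEq α]
  [Fintype β] [DecidableEq β] [Fintype γ] [DecidableEq γ]
  (p : Ω → ℝ)

lemma pmfProb_nonneg (hp : ∀ ω, 0 ≤ p ω) (F : Ω → α) (x : α) : 0 ≤ pmfProb p F x := by
  apply Finset.sum_nonneg
  intro ω _
  split <;> simp [hp ω]

lemma pmfProb_mono (hp : ∀ ω, 0 ≤ p ω) (F : Ω → α) (G : Ω → β) (x : α) (y : β)
    (h : ∀ ω, F ω = x → G ω = y) : pmfProb p F x ≤ pmfProb p G y := by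
  apply Finset.sum_le_sum
  intro ω _
  by_cases hF : F ω = x
  · simp [hF, h ω hF]
  · simp only [hF, if_false]
    split <;> simp [hp ω]

lemma self_le_pmfProb (hp : ∀ ω, 0 ≤ p ω) (F : Ω → α) (ω₀ : Ω) :
    p ω₀ ≤ pmfProb p F (F ω₀) := by
  classical
  rw [pmfProb]
  calc p ω₀ = ∑ ω, if ω = ω₀ then p ω else 0 := by simp
  _ ≤ _ := by
      apply Finset.sum_le_sum
      intro ω _
      by_cases hω : ω = ω₀
      · simp [hω]
      · simp only [hω, if_false]
        split <;> simp [hp ω]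

lemma sum_pmfProb (hp1 : ∑ ω, p ω = 1) (F : Ω → α) : ∑ x, pmfProb p F x = 1 := by
  rw [← hp1]
  unfold pmfProb
  rw [Finset.sum_comm]
  apply Finset.sum_congr rfl
  intro ω _
  simp

lemma pmfProb_marg (F : Ω → α) (G : Ω → β) (b : β) :
    ∑ a, pmfProb p (fun ω => (F ω, G ω)) (a, b) = pmfProb p G b := by
  unfold pmfProb
  rw [Finset.sum_comm]
  apply Finset.sum_congr rfl
  intro ω _
  simp only [Prod.mk.injEq, ite_and]
  rw [Finset.sum_ite_eq Finset.univ (F ω)]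
  simp

lemma sum_p_mul (F : Ω → α) (G : α → ℝ) :
    ∑ ω, p ω * G (F ω) = ∑ x, pmfProb p F x * G x := by
  unfold pmfProb
  simp only [Finset.sum_mul]
  rw [Finset.sum_comm]
  apply Finset.sum_congr rfl
  intro ω _
  simp only [ite_mul, zero_mul]
  rw [Finset.sum_ite_eq Finset.univ (F ω)]
  simp

lemma entH_eq (F : Ω → α) : entH p F = -∑ x, pmfProb p F x * Real.log (pmfProb p F x) := by
  unfold entH
  rw [← Finset.sum_neg_distrib]
  apply Finset.sum_congr rfl
  intro x _
  rw [Real.negMulLog]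
  ring

end Basic
lemma gibbs_submod {α β γ : Type*} [Fintype α] [Fintype β] [Fintype γ]
    (P3 : α × β × γ → ℝ) (Puw : α × γ → ℝ) (Pvw : β × γ → ℝ) (Pw : γ → ℝ)
    (h3nn : ∀ x, 0 ≤ P3 x) (huwnn : ∀ y, 0 ≤ Puw y) (hvwnn : ∀ z, 0 ≤ Pvw z)
    (hwnn : ∀ c, 0 ≤ Pw c)
    (h3sum : ∑ x, P3 x = 1) (hwsum : ∑ c, Pw c = 1)
    (hmuw : ∀ c, ∑ a, Puw (a, c) = Pw c) (hmvw : ∀ c, ∑ v, Pvw (v, c) = Pw c)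
    (hdom1 : ∀ x : α × β × γ, P3 x ≤ Puw (x.1, x.2.2))
    (hdom2 : ∀ x : α × β × γ, P3 x ≤ Pvw x.2)
    (hdom3 : ∀ x : α × β × γ, P3 x ≤ Pw x.2.2) :
    ∑ x, P3 x * Real.log (Puw (x.1, x.2.2)) + ∑ x, P3 x * Real.log (Pvw x.2)
      ≤ ∑ x, P3 x * Real.log (P3 x) + ∑ x, P3 x * Real.log (Pw x.2.2) := by
  classical
  set b : α × β × γ → ℝ := fun x =>
    if 0 < Pw x.2.2 then Puw (x.1, x.2.2) * Pvw x.2 / Pw x.2.2 else 0 with hbdef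
  have hbnn : ∀ x, 0 ≤ b x := by
    intro x
    rw [hbdef]
    by_cases hg : 0 < Pw x.2.2
    · simp only [hg, if_true]
      have h1 := huwnn (x.1, x.2.2)
      have h2 := hvwnn x.2
      positivity
    · simp [hg]
  have claim1 : ∀ x : α × β × γ,
      P3 x * Real.log (Puw (x.1, x.2.2)) + P3 x * Real.log (Pvw x.2)
        - P3 x * Real.log (P3 x) - P3 x * Real.log (Pw x.2.2) ≤ b x - P3 x := by
    intro x
    rcases eq_or_lt_of_le (h3nn x) with h0 | h0
    · rw [← h0]
      simp only [zero_mul, sub_zero, add_zero, zero_sub, zero_mul, zero_add, neg_zero]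
      linarith [hbnn x]
    · have hp3 : 0 < P3 x := h0
      have h1 : 0 < Puw (x.1, x.2.2) := lt_of_lt_of_le hp3 (hdom1 x)
      have h2 : 0 < Pvw x.2 := lt_of_lt_of_le hp3 (hdom2 x)
      have h3 : 0 < Pw x.2.2 := lt_of_lt_of_le hp3 (hdom3 x)
      have hb : b x = Puw (x.1, x.2.2) * Pvw x.2 / Pw x.2.2 := by
        rw [hbdef]; simp [h3]
      have ht : 0 < Puw (x.1, x.2.2) * Pvw x.2 / (P3 x * Pw x.2.2) := by positivity
      have hlog := Real.log_le_sub_one_of_pos ht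
      have hexp : Real.log (Puw (x.1, x.2.2) * Pvw x.2 / (P3 x * Pw x.2.2))
          = Real.log (Puw (x.1, x.2.2)) + Real.log (Pvw x.2)
            - Real.log (P3 x) - Real.log (Pw x.2.2) := by
        rw [Real.log_div (by positivity) (by positivity),
            Real.log_mul (ne_of_gt h1) (ne_of_gt h2),
            Real.log_mul (ne_of_gt hp3) (ne_of_gt h3)]
        ring
      rw [hexp] at hlog
      have hmul := mul_le_mul_of_nonneg_left hlog (le_of_lt hp3)
      have hrt : P3 x * (Puw (x.1, x.2.2) * Pvw x.2 / (P3 x * Pw x.2.2))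
          = Puw (x.1, x.2.2) * Pvw x.2 / Pw x.2.2 := by
        field_simp
      have h4 : P3 x * (Real.log (Puw (x.1, x.2.2)) + Real.log (Pvw x.2)
            - Real.log (P3 x) - Real.log (Pw x.2.2))
          ≤ Puw (x.1, x.2.2) * Pvw x.2 / Pw x.2.2 - P3 x := by
        calc P3 x * (Real.log (Puw (x.1, x.2.2)) + Real.log (Pvw x.2)
              - Real.log (P3 x) - Real.log (Pw x.2.2))
            ≤ P3 x * (Puw (x.1, x.2.2) * Pvw x.2 / (P3 x * Pw x.2.2) - 1) := hmul
          _ = Puw (x.1, x.2.2) * Pvw x.2 / Pw x.2.2 - P3 x := by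
              rw [mul_sub, mul_one, hrt]
      have h5 : P3 x * (Real.log (Puw (x.1, x.2.2)) + Real.log (Pvw x.2)
            - Real.log (P3 x) - Real.log (Pw x.2.2))
          = P3 x * Real.log (Puw (x.1, x.2.2)) + P3 x * Real.log (Pvw x.2)
            - P3 x * Real.log (P3 x) - P3 x * Real.log (Pw x.2.2) := by ring
      rw [hb]
      linarith [h4, h5]
  have claim2 : ∑ x : α × β × γ, b x ≤ 1 := by
    have hsplit : ∑ x : α × β × γ, b x = ∑ c, ∑ v, ∑ a, b (a, v, c) := by
      rw [Fintype.sum_prod_type, Finset.sum_comm, Fintype.sum_prod_type]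
      exact Finset.sum_comm
    rw [hsplit]
    have hc : ∀ c : γ, ∑ v, ∑ a, b (a, v, c) = if 0 < Pw c then Pw c else 0 := by
      intro c
      by_cases hg : 0 < Pw c
      · show (∑ v, ∑ a, if 0 < Pw c then Puw (a, c) * Pvw (v, c) / Pw c else 0) = _
        simp only [hg, if_true]
        calc ∑ v, ∑ a, Puw (a, c) * Pvw (v, c) / Pw c
            = ∑ v, (∑ a, Puw (a, c)) * (Pvw (v, c) / Pw c) := by
              apply Finset.sum_congr rfl
              intro v _
              rw [Finset.sum_mul]
              exact Finset.sum_congr rfl fun a _ => (mul_div_assoc _ _ _)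
          _ = ∑ v, Pvw (v, c) := by
              rw [hmuw c]
              apply Finset.sum_congr rfl
              intro v _
              rw [mul_comm, div_mul_cancel₀ _ (ne_of_gt hg)]
          _ = Pw c := hmvw c
      · show (∑ v, ∑ a, if 0 < Pw c then Puw (a, c) * Pvw (v, c) / Pw c else 0) = _
        simp [hg]
    calc ∑ c, ∑ v, ∑ a, b (a, v, c) = ∑ c, if 0 < Pw c then Pw c else 0 :=
          Finset.sum_congr rfl fun c _ => hc c
      _ ≤ ∑ c, Pw c := by
          apply Finset.sum_le_sum
          intro c _
          split
          · exact le_rfl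
          · exact hwnn c
      _ = 1 := hwsum
  have hbig : ∑ x : α × β × γ,
      (P3 x * Real.log (Puw (x.1, x.2.2)) + P3 x * Real.log (Pvw x.2)
        - P3 x * Real.log (P3 x) - P3 x * Real.log (Pw x.2.2)) ≤ 0 := by
    calc ∑ x : α × β × γ,
        (P3 x * Real.log (Puw (x.1, x.2.2)) + P3 x * Real.log (Pvw x.2)
          - P3 x * Real.log (P3 x) - P3 x * Real.log (Pw x.2.2))
        ≤ ∑ x : α × β × γ, (b x - P3 x) := Finset.sum_le_sum fun x _ => claim1 x
      _ = ∑ x : α × β × γ, b x - ∑ x, P3 x := Finset.sum_sub_distrib _ _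
      _ ≤ 0 := by rw [h3sum]; linarith
  rw [Finset.sum_sub_distrib, Finset.sum_sub_distrib, Finset.sum_add_distrib] at hbig
  linarith

section Main
variable {Ω : Type*} [Fintype Ω] {α β γ : Type*} [Fintype α] [DecidableEq α]
  [Fintype β] [DecidableEq β] [Fintype γ] [DecidableEq γ]
  (p : Ω → ℝ)

lemma entH_submodular (hp : ∀ ω, 0 ≤ p ω) (hp1 : ∑ ω, p ω = 1)
    (U : Ω → α) (V : Ω → β) (W : Ω → γ) :
    entH p (fun ω => (U ω, V ω, W ω)) + entH p W
      ≤ entH p (fun ω => (U ω, W ω)) + entH p (fun ω => (V ω, W ω)) := by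
  rw [entH_eq, entH_eq, entH_eq, entH_eq]
  have hW : ∑ c, pmfProb p W c * Real.log (pmfProb p W c)
      = ∑ x : α × β × γ, pmfProb p (fun ω => (U ω, V ω, W ω)) x
          * Real.log (pmfProb p W x.2.2) := by
    rw [← sum_p_mul p W (fun c => Real.log (pmfProb p W c)),
        ← sum_p_mul p (fun ω => (U ω, V ω, W ω)) (fun x => Real.log (pmfProb p W x.2.2))]
  have hUW : ∑ y : α × γ, pmfProb p (fun ω => (U ω, W ω)) y
        * Real.log (pmfProb p (fun ω => (U ω, W ω)) y)
      = ∑ x : α × β × γ, pmfProb p (fun ω => (U ω, V ω, W ω)) x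
          * Real.log (pmfProb p (fun ω => (U ω, W ω)) (x.1, x.2.2)) := by
    rw [← sum_p_mul p (fun ω => (U ω, W ω))
          (fun y => Real.log (pmfProb p (fun ω => (U ω, W ω)) y)),
        ← sum_p_mul p (fun ω => (U ω, V ω, W ω))
          (fun x => Real.log (pmfProb p (fun ω => (U ω, W ω)) (x.1, x.2.2)))]
  have hVW : ∑ z : β × γ, pmfProb p (fun ω => (V ω, W ω)) z
        * Real.log (pmfProb p (fun ω => (V ω, W ω)) z)
      = ∑ x : α × β × γ, pmfProb p (fun ω => (U ω, V ω, W ω)) x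
          * Real.log (pmfProb p (fun ω => (V ω, W ω)) x.2) := by
    rw [← sum_p_mul p (fun ω => (V ω, W ω))
          (fun z => Real.log (pmfProb p (fun ω => (V ω, W ω)) z)),
        ← sum_p_mul p (fun ω => (U ω, V ω, W ω))
          (fun x => Real.log (pmfProb p (fun ω => (V ω, W ω)) x.2))]
  have key := gibbs_submod (pmfProb p (fun ω => (U ω, V ω, W ω)))
      (pmfProb p (fun ω => (U ω, W ω))) (pmfProb p (fun ω => (V ω, W ω))) (pmfProb p W)
      (pmfProb_nonneg p hp _) (pmfProb_nonneg p hp _) (pmfProb_nonneg p hp _)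
      (pmfProb_nonneg p hp _)
      (sum_pmfProb p hp1 _) (sum_pmfProb p hp1 _)
      (fun c => pmfProb_marg p U W c) (fun c => pmfProb_marg p V W c)
      (fun x => pmfProb_mono p hp _ _ _ _ (fun ω hω => by subst hω; rfl))
      (fun x => pmfProb_mono p hp _ _ _ _ (fun ω hω => by subst hω; rfl))
      (fun x => pmfProb_mono p hp _ _ _ _ (fun ω hω => by subst hω; rfl))
  rw [hW, hUW, hVW]
  linarith [key]

lemma condH_cond_reduce (hp : ∀ ω, 0 ≤ p ω) (hp1 : ∑ ω, p ω = 1)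
    (U : Ω → α) (V : Ω → β) (W : Ω → γ) :
    condH p U (fun ω => (V ω, W ω)) ≤ condH p U W := by
  have key := entH_submodular p hp hp1 U V W
  unfold condH
  dsimp only
  linarith [key]

lemma entH_eq_sum_image (F : Ω → α) :
    entH p F = ∑ a ∈ Finset.univ.image F, Real.negMulLog (pmfProb p F a) := by
  refine (Finset.sum_subset (Finset.subset_univ _) ?_).symm
  intro a _ ha
  have h0 : pmfProb p F a = 0 := by
    unfold pmfProb
    apply Finset.sum_eq_zero
    intro ω _
    have : F ω ≠ a := fun h => ha (Finset.mem_image.2 ⟨ω, Finset.mem_univ ω, h⟩)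
    simp [this]
  rw [h0, Real.negMulLog_zero]

lemma entH_congr (A : Ω → α) (B : Ω → γ) (f : α → γ) (g : γ → α)
    (hf : ∀ ω, f (A ω) = B ω) (hg : ∀ ω, g (B ω) = A ω) :
    entH p A = entH p B := by
  classical
  rw [entH_eq_sum_image, entH_eq_sum_image]
  refine Finset.sum_bij' (fun a _ => f a) (fun b _ => g b) ?_ ?_ ?_ ?_ ?_
  · intro a ha
    obtain ⟨ω, _, rfl⟩ := Finset.mem_image.1 ha
    show f (A ω) ∈ _
    rw [hf ω]
    exact Finset.mem_image.2 ⟨ω, Finset.mem_univ ω, rfl⟩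
  · intro b hb
    obtain ⟨ω, _, rfl⟩ := Finset.mem_image.1 hb
    show g (B ω) ∈ _
    rw [hg ω]
    exact Finset.mem_image.2 ⟨ω, Finset.mem_univ ω, rfl⟩
  · intro a ha
    obtain ⟨ω, _, rfl⟩ := Finset.mem_image.1 ha
    show g (f (A ω)) = A ω
    rw [hf ω, hg ω]
  · intro b hb
    obtain ⟨ω, _, rfl⟩ := Finset.mem_image.1 hb
    show f (g (B ω)) = B ω
    rw [hg ω, hf ω]
  · intro a ha
    obtain ⟨ω₀, _, rfl⟩ := Finset.mem_image.1 ha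
    congr 1
    unfold pmfProb
    apply Finset.sum_congr rfl
    intro ω _
    congr 1
    simp only [eq_iff_iff]
    constructor
    · intro h
      rw [← hf ω, h]
    · intro h
      rw [← hg ω, h, hf ω₀, hg ω₀]

lemma condH_congr_fst (X : Ω → γ) (A : Ω → α) (A' : Ω → β) (f : α → β) (g : β → α)
    (hf : ∀ ω, f (A ω) = A' ω) (hg : ∀ ω, g (A' ω) = A ω) :
    condH p A X = condH p A' X := by
  unfold condH
  congr 1
  exact entH_congr p _ _ (Prod.map f id) (Prod.map g id)
    (fun ω => by simp [Prod.map, hf ω]) (fun ω => by simp [Prod.map, hg ω])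

lemma condH_congr_snd (U : Ω → γ) (B : Ω → α) (B' : Ω → β) (f : α → β) (g : β → α)
    (hf : ∀ ω, f (B ω) = B' ω) (hg : ∀ ω, g (B' ω) = B ω) :
    condH p U B = condH p U B' := by
  unfold condH
  rw [entH_congr p (fun ω => (U ω, B ω)) (fun ω => (U ω, B' ω)) (Prod.map id f)
      (Prod.map id g) (fun ω => by simp [Prod.map, hf ω])
      (fun ω => by simp [Prod.map, hg ω]),
    entH_congr p B B' f g hf hg]

end Main

def mask {Ω α : Type*} {k : ℕ} (Y : Fin k → Ω → α) (T : Finset (Fin k)) :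
    Ω → (Fin k → Option α) := fun ω j => if j ∈ T then some (Y j ω) else none

section Mask
variable {Ω : Type*} [Fintype Ω] {α β : Type*} [Fintype α] [DecidableEq α]
  [Fintype β] [DecidableEq β] {k : ℕ}
  (p : Ω → ℝ) (Y : Fin k → Ω → α) (X : Ω → β)

lemma condH_mask_empty : condH p (mask Y (∅ : Finset (Fin k))) X = 0 := by
  have hkey : entH p (fun ω => (mask Y (∅ : Finset (Fin k)) ω, X ω)) = entH p X :=
    entH_congr p _ X (fun z => z.2) (fun x => (fun _ => none, x)) (fun ω => rfl)
      (fun ω => by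
        have hm : mask Y (∅ : Finset (Fin k)) ω = fun _ => none := by
          funext j'
          simp [mask]
        rw [hm])
  unfold condH
  rw [hkey]
  ring

lemma mask_chain_step (a₀ : α) {T : Finset (Fin k)} {j : Fin k} (hj : j ∈ T) :
    condH p (mask Y T) X
      = condH p (mask Y (T.erase j)) X
        + condH p (Y j) (fun ω => (mask Y (T.erase j) ω, X ω)) := by
  have hkey : entH p (fun ω => (mask Y T ω, X ω))
      = entH p (fun ω => (Y j ω, (mask Y (T.erase j) ω, X ω))) := by
    apply entH_congr p _ _
      (fun z : (Fin k → Option α) × β =>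
        ((z.1 j).getD a₀, (fun j' => if j' = j then none else z.1 j', z.2)))
      (fun z : α × (Fin k → Option α) × β =>
        (fun j' => if j' = j then some z.1 else z.2.1 j', z.2.2))
    · intro ω
      dsimp only
      congr 1
      · simp [mask, hj]
      congr 1
      funext j'
      by_cases hj' : j' = j
      · subst hj'
        simp [mask]
      · simp [mask, hj', Finset.mem_erase]
    · intro ω
      dsimp only
      congr 1
      funext j'
      by_cases hj' : j' = j
      · subst hj'
        simp [mask, hj]
      · simp [mask, hj', Finset.mem_erase]
  unfold condH
  dsimp only
  linarith [hkey]

lemma condH_mask_subset (hp : ∀ ω, 0 ≤ p ω) (hp1 : ∑ ω, p ω = 1)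
    {α' : Type*} [Fintype α'] [DecidableEq α'] (U : Ω → α')
    {T' T'' : Finset (Fin k)} (hsub : T' ⊆ T'') :
    condH p U (fun ω => (mask Y T'' ω, X ω)) ≤ condH p U (fun ω => (mask Y T' ω, X ω)) := by
  have h1 := condH_cond_reduce p hp hp1 U (mask Y T'') (fun ω => (mask Y T' ω, X ω))
  have h2 := condH_congr_snd p U (fun ω => (mask Y T'' ω, (mask Y T' ω, X ω)))
    (fun ω => (mask Y T'' ω, X ω))
    (fun z => (z.1, z.2.2))
    (fun z => (z.1, (fun j => if j ∈ T' then z.1 j else none, z.2)))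
    (fun ω => rfl)
    (fun ω => by
      dsimp only
      congr 1
      congr 1
      funext j
      by_cases hjT : j ∈ T'
      · simp [mask, hjT, hsub hjT]
      · simp [mask, hjT])
  linarith [h1, h2]

lemma mask_chain (a₀ : α) (T : Finset (Fin k)) :
    condH p (mask Y T) X
      = ∑ j ∈ T, condH p (Y j)
          (fun ω => (mask Y (T.filter (fun i => i < j)) ω, X ω)) := by
  induction T using Finset.strongInduction with
  | _ T ih =>
    rcases eq_or_ne T ∅ with rfl | hne
    · simp [condH_mask_empty p Y X]
    · have hne' : T.Nonempty := Finset.nonempty_iff_ne_empty.2 hne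
      set j₀ := T.max' hne' with hj₀
      have hj₀mem : j₀ ∈ T := T.max'_mem hne'
      have hT' : T.erase j₀ = T.filter (fun i => i < j₀) := by
        ext x
        simp only [Finset.mem_erase, Finset.mem_filter]
        constructor
        · rintro ⟨hne2, hx⟩
          exact ⟨hx, lt_of_le_of_ne (Finset.le_max' T x hx) hne2⟩
        · rintro ⟨hx, hlt⟩
          exact ⟨ne_of_lt hlt, hx⟩
      have hfilter : ∀ j ∈ T.erase j₀,
          (T.erase j₀).filter (fun i => i < j) = T.filter (fun i => i < j) := by
        intro j hjmem
        have hj1 : j ≠ j₀ := (Finset.mem_erase.1 hjmem).1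
        have hj2 : j ∈ T := (Finset.mem_erase.1 hjmem).2
        have hjlt : j < j₀ := lt_of_le_of_ne (Finset.le_max' T j hj2) hj1
        ext x
        simp only [Finset.mem_erase, Finset.mem_filter]
        constructor
        · rintro ⟨⟨_, hx⟩, hlt⟩
          exact ⟨hx, hlt⟩
        · rintro ⟨hx, hlt⟩
          exact ⟨⟨ne_of_lt (lt_trans hlt hjlt), hx⟩, hlt⟩
      calc condH p (mask Y T) X
          = condH p (mask Y (T.erase j₀)) X
            + condH p (Y j₀) (fun ω => (mask Y (T.erase j₀) ω, X ω)) :=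
            mask_chain_step p Y X a₀ hj₀mem
        _ = (∑ j ∈ T.erase j₀, condH p (Y j)
              (fun ω => (mask Y (T.filter (fun i => i < j)) ω, X ω)))
            + condH p (Y j₀) (fun ω => (mask Y (T.filter (fun i => i < j₀)) ω, X ω)) := by
            congr 1
            · rw [ih (T.erase j₀) (Finset.erase_ssubset hj₀mem)]
              apply Finset.sum_congr rfl
              intro j hjmem
              rw [hfilter j hjmem]
            · rw [hT']
        _ = ∑ j ∈ T, condH p (Y j)
              (fun ω => (mask Y (T.filter (fun i => i < j)) ω, X ω)) :=
            Finset.sum_erase_add T _ hj₀mem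

lemma mask_lower (hp : ∀ ω, 0 ≤ p ω) (hp1 : ∑ ω, p ω = 1) (a₀ : α) (T : Finset (Fin k)) :
    ∑ j ∈ T, condH p (Y j) (fun ω => (mask Y (Finset.Iio j) ω, X ω))
      ≤ condH p (mask Y T) X := by
  rw [mask_chain p Y X a₀ T]
  apply Finset.sum_le_sum
  intro j hjmem
  apply condH_mask_subset p Y X hp hp1
  intro x hx
  simp only [Finset.mem_filter] at hx
  simp only [Finset.mem_Iio]
  exact hx.2

lemma mask_full (a₀ : α) :
    condH p (mask Y (Finset.univ : Finset (Fin k))) X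
      = ∑ j : Fin k, condH p (Y j) (fun ω => (mask Y (Finset.Iio j) ω, X ω)) := by
  rw [mask_chain p Y X a₀ Finset.univ]
  apply Finset.sum_congr rfl
  intro j _
  have : (Finset.univ.filter (fun i => i < j)) = Finset.Iio j := by
    ext x
    simp [Finset.mem_Iio]
  rw [this]

end Mask


/-- if every element of `{1,…,k}` is contained in exactly `h` members
(counted with multiplicity over the finite index set `ι`) of the family
`S : ι → Finset (Fin k)`, then `∑ i, H(Y_{S i} | X) ≥ h * H(Y_{[k]} | X)`. -/
theorem sum_condEntropy_cover_ge {Ω α β ι : Type*} [Fintype Ω] [Fintype α] [DecidableEq α]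
    [Fintype β] [DecidableEq β] [Fintype ι]
    (p : Ω → ℝ) (hp : ∀ ω, 0 ≤ p ω) (hp1 : ∑ ω, p ω = 1)
    (k h : ℕ) (hk : 0 < k) (hh : 0 < h)
    (X : Ω → β) (Y : Fin k → Ω → α)
    (S : ι → Finset (Fin k))
    (hS : ∀ a : Fin k, (Finset.univ.filter (fun i => a ∈ S i)).card = h) :
    (h : ℝ) * condH p (fun ω (j : Fin k) => Y j ω) X
      ≤ ∑ i, condH p (fun ω (j : ↥(S i)) => Y j.1 ω) X := by
  classical
  rcases isEmpty_or_nonempty Ω with hΩ | hΩ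
  · rw [Finset.univ_eq_empty, Finset.sum_empty] at hp1
    exact absurd hp1 zero_ne_one
  obtain ⟨ω₀⟩ := hΩ
  set a₀ : α := Y ⟨0, hk⟩ ω₀ with ha₀
  have hLHS : condH p (fun ω (j : Fin k) => Y j ω) X = condH p (mask Y Finset.univ) X := by
    apply condH_congr_fst p X _ _
      (fun v : Fin k → α => fun j =>
        if j ∈ (Finset.univ : Finset (Fin k)) then some (v j) else none)
      (fun m : Fin k → Option α => fun j => (m j).getD a₀)
    · intro ω
      rfl
    · intro ω
      funext j
      simp [mask]
  have hRHS : ∀ i, condH p (fun ω (j : ↥(S i)) => Y j.1 ω) X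
      = condH p (mask Y (S i)) X := by
    intro i
    apply condH_congr_fst p X _ _
      (fun v : ↥(S i) → α => fun j => if hj : j ∈ S i then some (v ⟨j, hj⟩) else none)
      (fun m : Fin k → Option α => fun j : ↥(S i) => (m j.1).getD a₀)
    · intro ω
      funext j
      by_cases hmem : j ∈ S i
      · simp [mask, hmem]
      · simp [mask, hmem]
    · intro ω
      funext j
      simp [mask, j.2]
  have hdouble : ∑ i, ∑ j ∈ S i, condH p (Y j) (fun ω => (mask Y (Finset.Iio j) ω, X ω))
      = ∑ j : Fin k, (h:ℝ) * condH p (Y j) (fun ω => (mask Y (Finset.Iio j) ω, X ω)) := by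
    have hswap : ∀ i, ∑ j ∈ S i, condH p (Y j) (fun ω => (mask Y (Finset.Iio j) ω, X ω))
        = ∑ j : Fin k, if j ∈ S i then
            condH p (Y j) (fun ω => (mask Y (Finset.Iio j) ω, X ω)) else 0 := by
      intro i
      rw [Finset.sum_ite_mem, Finset.univ_inter]
    calc ∑ i, ∑ j ∈ S i, condH p (Y j) (fun ω => (mask Y (Finset.Iio j) ω, X ω))
        = ∑ i, ∑ j : Fin k, if j ∈ S i then
            condH p (Y j) (fun ω => (mask Y (Finset.Iio j) ω, X ω)) else 0 :=
          Finset.sum_congr rfl fun i _ => hswap i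
      _ = ∑ j : Fin k, ∑ i, if j ∈ S i then
            condH p (Y j) (fun ω => (mask Y (Finset.Iio j) ω, X ω)) else 0 :=
          Finset.sum_comm
      _ = ∑ j : Fin k, (h:ℝ) * condH p (Y j) (fun ω => (mask Y (Finset.Iio j) ω, X ω)) := by
          apply Finset.sum_congr rfl
          intro j _
          rw [← Finset.sum_filter, Finset.sum_const, hS j]
          simp [nsmul_eq_mul]
  rw [hLHS]
  calc (h:ℝ) * condH p (mask Y Finset.univ) X
      = (h:ℝ) * ∑ j : Fin k, condH p (Y j) (fun ω => (mask Y (Finset.Iio j) ω, X ω)) := by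
        rw [mask_full p Y X a₀]
    _ = ∑ j : Fin k, (h:ℝ) * condH p (Y j) (fun ω => (mask Y (Finset.Iio j) ω, X ω)) :=
        Finset.mul_sum _ _ _
    _ = ∑ i, ∑ j ∈ S i, condH p (Y j) (fun ω => (mask Y (Finset.Iio j) ω, X ω)) :=
        hdouble.symm
    _ ≤ ∑ i, condH p (mask Y (S i)) X :=
        Finset.sum_le_sum fun i _ => mask_lower p Y X hp hp1 a₀ (S i)
    _ = ∑ i, condH p (fun ω (j : ↥(S i)) => Y j.1 ω) X :=
        Finset.sum_congr rfl fun i _ => (hRHS i).symm
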